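/- Define g₀(β) = 1 - (3+β²+2β)/(π(1+β²)β) + ((3-β²-2β)/(πβ²))·arctan β. Then g₀(β) < -0.03 for all β ∈ (0, 3/4]. -/

import Mathlib

open Real

lemma arctan_le_poly9 (x : ℝ) (hx : 0 ≤ x) :
    Real.arctan x ≤ x - x ^ 3 / 3 + x ^ 5 / 5 - x ^ 7 / 7 + x ^ 9 / 9 := by
  set f : ℝ → ℝ := fun t => t - t ^ 3 / 3 + t ^ 5 / 5 - t ^ 7 / 7 + t ^ 9 / 9 - Real.arctan t
    with hf
  have hd : ∀ y : ℝ, HasDerivAt f ((1 - y ^ 2 + y ^ 4 - y ^ 6 + y ^ 8) - 1 / (1 + y ^ 2)) y := by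
    intro y
    have h1 : HasDerivAt (fun t : ℝ => t - t ^ 3 / 3 + t ^ 5 / 5 - t ^ 7 / 7 + t ^ 9 / 9)
        (1 - y ^ 2 + y ^ 4 - y ^ 6 + y ^ 8) y := by
      have := ((((hasDerivAt_id y).sub ((hasDerivAt_pow 3 y).div_const 3)).add
        ((hasDerivAt_pow 5 y).div_const 5)).sub ((hasDerivAt_pow 7 y).div_const 7)).add
        ((hasDerivAt_pow 9 y).div_const 9)
      refine this.congr_deriv ?_
      push_cast
      ring
    exact h1.sub (Real.hasDerivAt_arctan y)
  have mono : MonotoneOn f (Set.Ici (0 : ℝ)) := by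
    apply monotoneOn_of_deriv_nonneg (convex_Ici 0)
    · exact fun y _ => (hd y).continuousAt.continuousWithinAt
    · intro y _
      exact (hd y).differentiableAt.differentiableWithinAt
    · intro y _
      rw [(hd y).deriv]
      have h1y : (0 : ℝ) < 1 + y ^ 2 := by positivity
      have : (1 - y ^ 2 + y ^ 4 - y ^ 6 + y ^ 8) - 1 / (1 + y ^ 2) = y ^ 10 / (1 + y ^ 2) := by
        field_simp
        ring
      rw [this]
      positivity
  have h0 : f 0 ≤ f x := mono Set.self_mem_Ici hx hx
  have hf0 : f 0 = 0 := by simp [hf]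
  have hfx : f x = x - x ^ 3 / 3 + x ^ 5 / 5 - x ^ 7 / 7 + x ^ 9 / 9 - Real.arctan x := rfl
  rw [hf0, hfx] at h0
  linarith

lemma poly_pos (b : ℝ) (hb : 0 < b) (hb2 : b ≤ 3 / 4) :
    0 < 95519 / 125000 - 713443 / 375000 * b ^ 2 + 16 / 15 * b ^ 3 - 4 / 15 * b ^ 4
      - 32 / 105 * b ^ 5 + 4 / 35 * b ^ 6 + 16 / 105 * b ^ 7 - 4 / 63 * b ^ 8
      - 23 / 63 * b ^ 9 + 2 / 9 * b ^ 10 + 1 / 9 * b ^ 11 := by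
  set H : ℝ := 115107217193 / 86016000000 - 1035509 / 1376256 * b + 720829 / 1720320 * b ^ 2
      + 87359 / 430080 * b ^ 3 - 4857 / 35840 * b ^ 4 - 761 / 26880 * b ^ 5 + 667 / 4032 * b ^ 6
      + 137 / 1008 * b ^ 7 - 11 / 36 * b ^ 8 - 1 / 9 * b ^ 9 with hH
  have hHpos : 0 < H := by
    have p1 : b ^ 1 ≤ (3 / 4 : ℝ) ^ 1 := pow_le_pow_left₀ hb.le hb2 1
    have p4 : b ^ 4 ≤ (3 / 4 : ℝ) ^ 4 := pow_le_pow_left₀ hb.le hb2 4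
    have p5 : b ^ 5 ≤ (3 / 4 : ℝ) ^ 5 := pow_le_pow_left₀ hb.le hb2 5
    have p8 : b ^ 8 ≤ (3 / 4 : ℝ) ^ 8 := pow_le_pow_left₀ hb.le hb2 8
    have p9 : b ^ 9 ≤ (3 / 4 : ℝ) ^ 9 := pow_le_pow_left₀ hb.le hb2 9
    have q2 : (0 : ℝ) ≤ b ^ 2 := by positivity
    have q3 : (0 : ℝ) ≤ b ^ 3 := by positivity
    have q6 : (0 : ℝ) ≤ b ^ 6 := by positivity
    have q7 : (0 : ℝ) ≤ b ^ 7 := by positivity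
    rw [hH]
    have hb1 : b ^ 1 = b := pow_one b
    rw [← hb1]
    nlinarith [p1, p4, p5, p8, p9, q2, q3, q6, q7]
  have h34 : 0 ≤ 3 / 4 - b := by linarith
  have key : 95519 / 125000 - 713443 / 375000 * b ^ 2 + 16 / 15 * b ^ 3 - 4 / 15 * b ^ 4
      - 32 / 105 * b ^ 5 + 4 / 35 * b ^ 6 + 16 / 105 * b ^ 7 - 4 / 63 * b ^ 8
      - 23 / 63 * b ^ 9 + 2 / 9 * b ^ 10 + 1 / 9 * b ^ 11
      = 209384269 / 18350080000 + (3 / 4 - b) * (115107217193 / 114688000000)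
        + (3 / 4 - b) * (b * H) := by
    rw [hH]; ring
  rw [key]
  have t1 : 0 ≤ (3 / 4 - b) * (115107217193 / 114688000000 : ℝ) := by positivity
  have t2 : 0 ≤ (3 / 4 - b) * (b * H) :=
    mul_nonneg h34 (mul_nonneg hb.le hHpos.le)
  linarith

theorem g0_neg (β : ℝ) (hβ : β ∈ Set.Ioc (0:ℝ) (3 / 4)) :
    1 - (3 + β ^ 2 + 2 * β) / (π * (1 + β ^ 2) * β) +
      ((3 - β ^ 2 - 2 * β) / (π * β ^ 2)) * Real.arctan β < -0.03 := by
  obtain ⟨hb, hb2⟩ := hβ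
  have hπ0 : (0 : ℝ) < π := Real.pi_pos
  have hπu : π < 3.1416 := by
    have := Real.pi_lt_d6
    linarith
  have hcoef : (0 : ℝ) ≤ 3 - β ^ 2 - 2 * β := by nlinarith
  have harc : Real.arctan β ≤ β - β ^ 3 / 3 + β ^ 5 / 5 - β ^ 7 / 7 + β ^ 9 / 9 :=
    arctan_le_poly9 β hb.le
  set T : ℝ := β - β ^ 3 / 3 + β ^ 5 / 5 - β ^ 7 / 7 + β ^ 9 / 9 with hT
  have hcoef' : (0 : ℝ) ≤ (3 - β ^ 2 - 2 * β) / (π * β ^ 2) := by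
    apply div_nonneg hcoef
    positivity
  have step1 : 1 - (3 + β ^ 2 + 2 * β) / (π * (1 + β ^ 2) * β) +
      ((3 - β ^ 2 - 2 * β) / (π * β ^ 2)) * Real.arctan β ≤
      1 - (3 + β ^ 2 + 2 * β) / (π * (1 + β ^ 2) * β) +
      ((3 - β ^ 2 - 2 * β) / (π * β ^ 2)) * T := by
    have := mul_le_mul_of_nonneg_left harc hcoef'
    linarith
  have hβ2 : (0 : ℝ) < β ^ 2 := by positivity
  have h1β : (0 : ℝ) < 1 + β ^ 2 := by positivity
  have hD : (0 : ℝ) < π * β ^ 2 * (1 + β ^ 2) := by positivity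
  have step2 : 1 - (3 + β ^ 2 + 2 * β) / (π * (1 + β ^ 2) * β) +
      ((3 - β ^ 2 - 2 * β) / (π * β ^ 2)) * T
      = 1 + (-(β * (3 + β ^ 2 + 2 * β)) + (3 - β ^ 2 - 2 * β) * (1 + β ^ 2) * T) /
        (π * β ^ 2 * (1 + β ^ 2)) := by
    field_simp
    ring
  have hQ : 0 < β * (3 + β ^ 2 + 2 * β) - (1 + β ^ 2) * (3 - β ^ 2 - 2 * β) * T
      - (103 / 100) * (31416 / 10000) * (β ^ 2 * (1 + β ^ 2)) := by
    have h := poly_pos β hb hb2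
    have h2 := mul_pos hβ2 h
    rw [hT]
    nlinarith [h2]
  have hπX : (0 : ℝ) ≤ (3.1416 - π) * (β ^ 2 * (1 + β ^ 2)) :=
    mul_nonneg (by linarith) (by positivity)
  have step3 : (-(β * (3 + β ^ 2 + 2 * β)) + (3 - β ^ 2 - 2 * β) * (1 + β ^ 2) * T) /
      (π * β ^ 2 * (1 + β ^ 2)) < -(103 / 100) := by
    rw [div_lt_iff₀ hD]
    have expand : -(103 / 100) * (π * β ^ 2 * (1 + β ^ 2))
        = -(103 / 100) * π * (β ^ 2 * (1 + β ^ 2)) := by ring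
    nlinarith [hQ, hπX]
  have final : 1 + (-(β * (3 + β ^ 2 + 2 * β)) + (3 - β ^ 2 - 2 * β) * (1 + β ^ 2) * T) /
      (π * β ^ 2 * (1 + β ^ 2)) < -0.03 := by
    norm_num at step3 ⊢
    linarith
  calc 1 - (3 + β ^ 2 + 2 * β) / (π * (1 + β ^ 2) * β) +
      ((3 - β ^ 2 - 2 * β) / (π * β ^ 2)) * Real.arctan β
      ≤ 1 - (3 + β ^ 2 + 2 * β) / (π * (1 + β ^ 2) * β) +
        ((3 - β ^ 2 - 2 * β) / (π * β ^ 2)) * T := step1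
    _ = 1 + (-(β * (3 + β ^ 2 + 2 * β)) + (3 - β ^ 2 - 2 * β) * (1 + β ^ 2) * T) /
        (π * β ^ 2 * (1 + β ^ 2)) := step2
    _ < -0.03 := final
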